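/- (Gale's lemma.) Let n, k, ℓ be positive integers with d = n − 2k − 2ℓ + 1 ≥ 1. Then there exists a mapping f : [n] → S^{d−1} such that for every open hemisphere H of S^{d−1} there is a stable (k+ℓ)-element subset S of [n] with f(S) ⊆ H. -/

import Mathlib

open scoped RealInnerProductSpace

/-- A subset of `Fin n` is *stable* (viewing `Fin n` as `[n]` arranged in a cycle)
if it contains no two cyclically consecutive elements. -/
def IsStable {n : ℕ} (S : Finset (Fin n)) : Prop :=
  ∀ i ∈ S, ∀ j ∈ S, ((i : ℕ) + 1) % n ≠ (j : ℕ)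

/-- `d = n - 2k - 2ℓ + 1`. -/
def dval (n k ℓ : ℕ) : ℕ := n - 2 * k - 2 * ℓ + 1

open Polynomial Set Classical

noncomputable section

lemma no_root_sign (p : ℝ[X]) (hp : p ≠ 0) (a b : ℝ) (hab : a < b)
    (ha : p.eval a ≠ 0) (hb : p.eval b ≠ 0)
    (hno : ∀ r ∈ p.roots, r ∉ Set.Ioo a b) : 0 < p.eval a * p.eval b := by
  rcases lt_trichotomy (p.eval a * p.eval b) 0 with h | h | h
  · exfalso
    have hc : ContinuousOn (fun t => p.eval t) (Icc a b) := (Polynomial.continuous p).continuousOn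
    rcases lt_trichotomy (p.eval a) 0 with ha' | ha' | ha'
    · have hb' : 0 < p.eval b := by nlinarith
      obtain ⟨c, hc1, hc2⟩ := intermediate_value_Ioo hab.le hc (by constructor <;> simpa)
      exact hno c (by rw [Polynomial.mem_roots hp]; exact hc2) hc1
    · exact ha ha'
    · have hb' : p.eval b < 0 := by nlinarith
      obtain ⟨c, hc1, hc2⟩ := intermediate_value_Ioo' hab.le hc (by constructor <;> simpa)
      exact hno c (by rw [Polynomial.mem_roots hp]; exact hc2) hc1
  · exact absurd h (mul_ne_zero ha hb)
  · exact h

/-- Parity of the number of roots (with multiplicity) in an open interval. -/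
lemma parity_roots : ∀ N : ℕ, ∀ p : ℝ[X], p.natDegree ≤ N → p ≠ 0 → ∀ a b : ℝ, a < b →
    p.eval a ≠ 0 → p.eval b ≠ 0 →
    (0 < p.eval a * p.eval b ↔ Even (Multiset.card (p.roots.filter (· ∈ Set.Ioo a b)))) := by
  intro N
  induction N with
  | zero =>
    intro p hdeg hp a b hab ha hb
    have hno : ∀ r ∈ p.roots, r ∉ Set.Ioo a b := by
      intro r hr
      have h1 := Polynomial.card_roots' p
      have h2 : r ∈ p.roots := hr
      have : Multiset.card p.roots = 0 := by omega
      rw [Multiset.card_eq_zero] at this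
      simp [this] at h2
    have hfil : p.roots.filter (· ∈ Set.Ioo a b) = 0 := by
      rw [Multiset.filter_eq_nil]
      exact hno
    rw [hfil]
    simpa using no_root_sign p hp a b hab ha hb hno
  | succ N ih =>
    intro p hdeg hp a b hab ha hb
    by_cases hex : ∃ r ∈ p.roots, r ∈ Set.Ioo a b
    · obtain ⟨r, hr, hrab⟩ := hex
      have hroot : p.IsRoot r := Polynomial.isRoot_of_mem_roots hr
      obtain ⟨p', hp'⟩ := (Polynomial.dvd_iff_isRoot).2 hroot
      have hXC : (X - C r : ℝ[X]) ≠ 0 := Polynomial.X_sub_C_ne_zero r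
      have hp'0 : p' ≠ 0 := by rintro rfl; simp [hp'] at hp
      have hdeg' : p'.natDegree ≤ N := by
        have : p.natDegree = 1 + p'.natDegree := by
          rw [hp', Polynomial.natDegree_mul hXC hp'0, Polynomial.natDegree_X_sub_C]
        omega
      have hevala : p.eval a = (a - r) * p'.eval a := by simp [hp']
      have hevalb : p.eval b = (b - r) * p'.eval b := by simp [hp']
      have ha' : p'.eval a ≠ 0 := fun h => ha (by simp [hevala, h])
      have hb' : p'.eval b ≠ 0 := fun h => hb (by simp [hevalb, h])
      have hroots : p.roots = r ::ₘ p'.roots := by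
        rw [hp', Polynomial.roots_mul (hp' ▸ hp), Polynomial.roots_X_sub_C]
        rfl
      have hfil : p.roots.filter (· ∈ Set.Ioo a b)
          = r ::ₘ p'.roots.filter (· ∈ Set.Ioo a b) := by
        rw [hroots, Multiset.filter_cons_of_pos _ hrab]
      have hneg : (a - r) * (b - r) < 0 :=
        mul_neg_of_neg_of_pos (by linarith [hrab.1]) (by linarith [hrab.2])
      have key : p.eval a * p.eval b = ((a - r) * (b - r)) * (p'.eval a * p'.eval b) := by
        rw [hevala, hevalb]; ring
      have hiff := ih p' hdeg' hp'0 a b hab ha' hb'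
      rw [hfil, key]
      simp only [Multiset.card_cons, Nat.even_add_one]
      constructor
      · intro h
        intro he
        have := hiff.2 he
        nlinarith
      · intro h
        rcases lt_trichotomy (p'.eval a * p'.eval b) 0 with h2 | h2 | h2
        · nlinarith
        · exact absurd h2 (mul_ne_zero ha' hb')
        · exact absurd (hiff.1 h2) h
    · push_neg at hex
      have hfil : p.roots.filter (· ∈ Set.Ioo a b) = 0 := by
        rw [Multiset.filter_eq_nil]; exact hex
      rw [hfil]
      simpa using no_root_sign p hp a b hab ha hb hex

lemma card_filter_add_le (s : Multiset ℝ) (P1 P2 P : ℝ → Prop)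
    [DecidablePred P1] [DecidablePred P2] [DecidablePred P]
    (hd : ∀ x, P1 x → P2 x → False) (h1 : ∀ x, P1 x → P x) (h2 : ∀ x, P2 x → P x) :
    Multiset.card (s.filter P1) + Multiset.card (s.filter P2)
      ≤ Multiset.card (s.filter P) := by
  have h := Multiset.filter_add_filter P1 P2 s
  have hand : s.filter (fun a => P1 a ∧ P2 a) = 0 := by
    rw [Multiset.filter_eq_nil]; exact fun a _ h' => hd a h'.1 h'.2
  have hor : s.filter (fun a => P1 a ∨ P2 a) ≤ s.filter P :=
    Multiset.monotone_filter_right s (fun a h' => h'.elim (h1 a) (h2 a))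
  have h2' := congrArg Multiset.card h
  rw [Multiset.card_add, hand] at h2'
  simp at h2'
  calc Multiset.card (s.filter P1) + Multiset.card (s.filter P2)
      = Multiset.card (s.filter (fun a => P1 a ∨ P2 a)) := h2'
    _ ≤ _ := Multiset.card_le_card hor

lemma int_zeros_le (p : ℝ[X]) (hp : p ≠ 0) (P : ℝ → Prop) [DecidablePred P] (F : Finset ℕ)
    (h : ∀ j ∈ F, p.eval (j : ℝ) = 0 ∧ P (j : ℝ)) :
    F.card ≤ Multiset.card (p.roots.filter P) := by
  classical
  have hsub : F.image (fun j : ℕ => (j : ℝ)) ⊆ (p.roots.filter P).toFinset := by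
    intro x hx
    obtain ⟨j, hj, rfl⟩ := Finset.mem_image.1 hx
    rw [Multiset.mem_toFinset, Multiset.mem_filter]
    exact ⟨(Polynomial.mem_roots hp).2 (h j hj).1, (h j hj).2⟩
  calc F.card = (F.image (fun j : ℕ => (j : ℝ))).card :=
        (Finset.card_image_of_injective F Nat.cast_injective).symm
    _ ≤ (p.roots.filter P).toFinset.card := Finset.card_le_card hsub
    _ ≤ Multiset.card (p.roots.filter P) := Multiset.toFinset_card_le _

/-- `qq p i = (-1)^i p(i)`. -/
noncomputable def qq (p : ℝ[X]) (i : ℕ) : ℝ := (-1)^i * p.eval (i : ℝ)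

lemma qq_eq_zero_iff (p : ℝ[X]) (i : ℕ) : qq p i = 0 ↔ p.eval (i : ℝ) = 0 := by
  unfold qq
  constructor
  · intro h
    rcases mul_eq_zero.1 h with h | h
    · exact absurd h (by positivity)
    · exact h
  · intro h; rw [h, mul_zero]

lemma qq_mul (p : ℝ[X]) (a c : ℕ) :
    qq p a * qq p c = (-1)^(a+c) * (p.eval (a:ℝ) * p.eval (c:ℝ)) := by
  unfold qq; rw [pow_add]; ring

set_option maxHeartbeats 1000000 in
lemma good_le_roots (p : ℝ[X]) (hp : p ≠ 0) :
    ∀ N a b : ℕ, a ≤ b → b - a ≤ N →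
    ((Finset.Ico a b).filter (fun i => (0 < qq p i ↔ 0 < qq p (i+1)))).card
      ≤ Multiset.card (p.roots.filter (· ∈ Set.Icc (a:ℝ) (b:ℝ))) := by
  classical
  intro N
  induction N with
  | zero =>
    intro a b hab h0
    have : a = b := by omega
    subst this
    simp
  | succ N ih =>
    intro a b hab hN
    rcases eq_or_lt_of_le hab with rfl | hlt
    · simp
    by_cases hpa : p.eval (a : ℝ) = 0
    · -- C1 : root at a
      have hsub : (Finset.Ico a b).filter (fun i => (0 < qq p i ↔ 0 < qq p (i+1)))
          ⊆ insert a ((Finset.Ico (a+1) b).filter (fun i => (0 < qq p i ↔ 0 < qq p (i+1)))) := by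
        intro i hi
        rw [Finset.mem_filter, Finset.mem_Ico] at hi
        rcases eq_or_lt_of_le hi.1.1 with rfl | h
        · exact Finset.mem_insert_self _ _
        · exact Finset.mem_insert_of_mem (Finset.mem_filter.2 ⟨Finset.mem_Ico.2 ⟨h, hi.1.2⟩, hi.2⟩)
      have hcard1 : ((Finset.Ico a b).filter (fun i => (0 < qq p i ↔ 0 < qq p (i+1)))).card
          ≤ 1 + ((Finset.Ico (a+1) b).filter (fun i => (0 < qq p i ↔ 0 < qq p (i+1)))).card := by
        calc ((Finset.Ico a b).filter (fun i => (0 < qq p i ↔ 0 < qq p (i+1)))).card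
            ≤ (insert a ((Finset.Ico (a+1) b).filter
                (fun i => (0 < qq p i ↔ 0 < qq p (i+1))))).card := Finset.card_le_card hsub
          _ ≤ ((Finset.Ico (a+1) b).filter
                (fun i => (0 < qq p i ↔ 0 < qq p (i+1)))).card + 1 := Finset.card_insert_le _ _
          _ = _ := by omega
      have hroot1 : 1 ≤ Multiset.card (p.roots.filter (fun x => x = (a:ℝ))) := by
        have hmem : (a:ℝ) ∈ p.roots.filter (fun x => x = (a:ℝ)) :=
          Multiset.mem_filter.2 ⟨(Polynomial.mem_roots hp).2 hpa, rfl⟩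
        exact Multiset.card_pos_iff_exists_mem.2 ⟨_, hmem⟩
      have hsplit := card_filter_add_le p.roots (fun x => x = (a:ℝ))
          (fun x => x ∈ Set.Icc (((a+1:ℕ)):ℝ) (b:ℝ)) (fun x => x ∈ Set.Icc (a:ℝ) (b:ℝ))
          (by rintro x rfl ⟨h1, h2⟩
              have : ((a:ℝ)) < ((a+1:ℕ):ℝ) := by exact_mod_cast Nat.lt_succ_self a
              linarith)
          (by rintro x rfl; exact ⟨le_refl _, by exact_mod_cast hab⟩)
          (by rintro x ⟨h1, h2⟩
              have : ((a:ℝ)) ≤ ((a+1:ℕ):ℝ) := by exact_mod_cast Nat.le_succ a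
              exact ⟨le_trans this h1, h2⟩)
      have hih := ih (a+1) b (by omega) (by omega)
      calc ((Finset.Ico a b).filter (fun i => (0 < qq p i ↔ 0 < qq p (i+1)))).card
          ≤ 1 + ((Finset.Ico (a+1) b).filter (fun i => (0 < qq p i ↔ 0 < qq p (i+1)))).card :=
            hcard1
        _ ≤ Multiset.card (p.roots.filter (fun x => x = (a:ℝ)))
            + Multiset.card (p.roots.filter (fun x => x ∈ Set.Icc (((a+1:ℕ)):ℝ) (b:ℝ))) :=
              Nat.add_le_add hroot1 hih
        _ ≤ _ := hsplit
    · by_cases hex : ∃ c ∈ Finset.Ioc a b, p.eval ((c:ℕ):ℝ) ≠ 0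
      · -- C2/C3 : let c be the least index in (a,b] where p doesn't vanish
        set F := (Finset.Ioc a b).filter (fun j : ℕ => p.eval (j:ℝ) ≠ 0) with hF
        have hFne : F.Nonempty := by
          obtain ⟨c, hc1, hc2⟩ := hex
          exact ⟨c, Finset.mem_filter.2 ⟨hc1, hc2⟩⟩
        set c := F.min' hFne with hc
        have hcF : c ∈ F := Finset.min'_mem _ _
        have hcIoc : a < c ∧ c ≤ b := Finset.mem_Ioc.1 (Finset.mem_filter.1 hcF).1
        have hpc : p.eval (c:ℝ) ≠ 0 := (Finset.mem_filter.1 hcF).2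
        have hzero : ∀ j, a < j → j < c → p.eval (j:ℝ) = 0 := by
          intro j hj1 hj2
          by_contra h
          have hjF : j ∈ F := Finset.mem_filter.2 ⟨Finset.mem_Ioc.2 ⟨hj1, by omega⟩, h⟩
          have := Finset.min'_le _ _ hjF
          omega
        have hac : a < c := hcIoc.1
        have hcb : c ≤ b := hcIoc.2
        have hcastac : (a:ℝ) < (c:ℝ) := by exact_mod_cast hac
        -- multiplicity in (a,c)
        set mult := Multiset.card (p.roots.filter (fun x => x ∈ Set.Ioo (a:ℝ) (c:ℝ))) with hmult
        have hzeros : c - a - 1 ≤ mult := by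
          have := int_zeros_le p hp (fun x => x ∈ Set.Ioo (a:ℝ) (c:ℝ)) (Finset.Ioo a c)
            (by
              intro j hj
              rw [Finset.mem_Ioo] at hj
              exact ⟨hzero j hj.1 hj.2, by exact_mod_cast hj.1, by exact_mod_cast hj.2⟩)
          rw [Nat.card_Ioo] at this
          exact this
        have hpar : 0 < p.eval (a:ℝ) * p.eval (c:ℝ) ↔ Even mult :=
          parity_roots p.natDegree p le_rfl hp _ _ hcastac hpa hpc
        have hqa : qq p a ≠ 0 := fun h => hpa ((qq_eq_zero_iff p a).1 h)
        have hqc : qq p c ≠ 0 := fun h => hpc ((qq_eq_zero_iff p c).1 h)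
        -- bound on good pairs in [a, c)
        have hGac : ((Finset.Ico a c).filter (fun i => (0 < qq p i ↔ 0 < qq p (i+1)))).card
            ≤ mult := by
          rcases lt_trichotomy (qq p a * qq p c) 0 with hs | hs | hs
          · -- opposite signs : mult ≥ c-a-1, and good pairs ≤ c-a-1
            have hGle : ((Finset.Ico a c).filter
                (fun i => (0 < qq p i ↔ 0 < qq p (i+1)))).card ≤ c - a - 1 := by
              rcases eq_or_lt_of_le (Nat.succ_le_of_lt hac) with hc1 | hc2
              · -- c = a + 1 : the single pair is not good
                have hzero2 : ((Finset.Ico a c).filter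
                    (fun i => (0 < qq p i ↔ 0 < qq p (i+1)))).card = 0 := by
                  rw [Finset.card_eq_zero, Finset.filter_eq_empty_iff]
                  intro i hi
                  rw [Finset.mem_Ico] at hi
                  have hia : i = a := by omega
                  subst hia
                  have hia1 : i + 1 = c := by omega
                  rw [hia1]
                  intro hgood
                  rcases lt_trichotomy (qq p i) 0 with h1 | h1 | h1
                  · have h2 : ¬ (0 < qq p i) := by linarith
                    have h3 := (not_iff_not.2 hgood).1 h2
                    push_neg at h3
                    rcases eq_or_lt_of_le h3 with h4 | h4
                    · exact hqc h4
                    · nlinarith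
                  · exact hqa h1
                  · have h3 := hgood.1 h1
                    nlinarith
                omega
              · -- c ≥ a + 2 : q(a+1) = 0 = q(c-1), an endpoint pair is not good
                have hqa1 : qq p (a+1) = 0 :=
                  (qq_eq_zero_iff p (a+1)).2 (by
                    have := hzero (a+1) (by omega) (by omega)
                    exact_mod_cast this)
                have hqc1 : qq p (c-1) = 0 :=
                  (qq_eq_zero_iff p (c-1)).2 (by
                    have := hzero (c-1) (by omega) (by omega)
                    exact_mod_cast this)
                rcases lt_trichotomy (qq p a) 0 with h1 | h1 | h1
                · -- qq a < 0, hence qq c > 0, pair (c-1) not good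
                  have hqcpos : 0 < qq p c := by nlinarith
                  have hsub2 : (Finset.Ico a c).filter
                      (fun i => (0 < qq p i ↔ 0 < qq p (i+1))) ⊆ Finset.Ico a (c-1) := by
                    intro i hi
                    rw [Finset.mem_filter, Finset.mem_Ico] at hi
                    rw [Finset.mem_Ico]
                    refine ⟨hi.1.1, ?_⟩
                    by_contra h
                    have hieq : i = c - 1 := by omega
                    have hic : i + 1 = c := by omega
                    rw [hic, hieq] at hi
                    rw [hqc1] at hi
                    exact lt_irrefl 0 (hi.2.2 hqcpos)
                  calc _ ≤ (Finset.Ico a (c-1)).card := Finset.card_le_card hsub2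
                    _ = (c-1) - a := Nat.card_Ico _ _
                    _ ≤ c - a - 1 := by omega
                · exact absurd h1 hqa
                · -- qq a > 0 : pair a not good since qq (a+1) = 0
                  have hsub2 : (Finset.Ico a c).filter
                      (fun i => (0 < qq p i ↔ 0 < qq p (i+1))) ⊆ Finset.Ico (a+1) c := by
                    intro i hi
                    rw [Finset.mem_filter, Finset.mem_Ico] at hi
                    rw [Finset.mem_Ico]
                    refine ⟨?_, hi.1.2⟩
                    rcases eq_or_lt_of_le hi.1.1 with rfl | h
                    · exfalso
                      have := hi.2.1 h1
                      rw [hqa1] at this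
                      exact lt_irrefl 0 this
                    · omega
                  calc _ ≤ (Finset.Ico (a+1) c).card := Finset.card_le_card hsub2
                    _ = c - (a+1) := Nat.card_Ico _ _
                    _ ≤ c - a - 1 := by omega
            omega
          · exact absurd hs (mul_ne_zero hqa hqc)
          · -- same signs : mult ≥ c - a by parity
            have hp2 : ((a + c) % 2 = 0 ↔ mult % 2 = 0) := by
              rw [← Nat.even_iff, ← Nat.even_iff]
              have hmul := qq_mul p a c
              rcases Nat.even_or_odd (a+c) with he | he
              · rw [Even.neg_one_pow he, one_mul] at hmul
                simp only [he, true_iff]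
                exact hpar.1 (by rw [← hmul]; exact hs)
              · rw [Odd.neg_one_pow he, neg_one_mul] at hmul
                constructor
                · intro h
                  exact absurd h (by simpa [Nat.even_iff, Nat.odd_iff] using he)
                · intro h
                  exfalso
                  have := hpar.2 h
                  nlinarith [hmul]
            have hge : c - a ≤ mult := by omega
            calc _ ≤ (Finset.Ico a c).card := Finset.card_filter_le _ _
              _ = c - a := Nat.card_Ico _ _
              _ ≤ mult := hge
        -- combine
        have hpairsplit : ((Finset.Ico a b).filter
              (fun i => (0 < qq p i ↔ 0 < qq p (i+1)))).card
            ≤ ((Finset.Ico a c).filter (fun i => (0 < qq p i ↔ 0 < qq p (i+1)))).card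
              + ((Finset.Ico c b).filter (fun i => (0 < qq p i ↔ 0 < qq p (i+1)))).card := by
          have hunion : Finset.Ico a b = Finset.Ico a c ∪ Finset.Ico c b :=
            (Finset.Ico_union_Ico_eq_Ico (le_of_lt hac) hcb).symm
          rw [hunion, Finset.filter_union]
          exact Finset.card_union_le _ _
        have hih := ih c b hcb (by omega)
        have hrootsplit := card_filter_add_le p.roots
            (fun x => x ∈ Set.Ioo (a:ℝ) (c:ℝ)) (fun x => x ∈ Set.Icc (c:ℝ) (b:ℝ))
            (fun x => x ∈ Set.Icc (a:ℝ) (b:ℝ))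
            (by rintro x ⟨h1, h2⟩ ⟨h3, h4⟩; linarith)
            (by rintro x ⟨h1, h2⟩
                have : (c:ℝ) ≤ (b:ℝ) := by exact_mod_cast hcb
                exact ⟨le_of_lt h1, le_trans (le_of_lt h2) this⟩)
            (by rintro x ⟨h1, h2⟩
                have : (a:ℝ) ≤ (c:ℝ) := le_of_lt hcastac
                exact ⟨le_trans this h1, h2⟩)
        calc ((Finset.Ico a b).filter (fun i => (0 < qq p i ↔ 0 < qq p (i+1)))).card
            ≤ _ := hpairsplit
          _ ≤ mult + Multiset.card (p.roots.filter (fun x => x ∈ Set.Icc (c:ℝ) (b:ℝ))) :=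
              Nat.add_le_add hGac hih
          _ ≤ _ := hrootsplit
      · -- all of (a,b] are roots
        push_neg at hex
        have hcard : ((Finset.Ico a b).filter
            (fun i => (0 < qq p i ↔ 0 < qq p (i+1)))).card ≤ b - a := by
          calc _ ≤ (Finset.Ico a b).card := Finset.card_filter_le _ _
            _ = b - a := Nat.card_Ico _ _
        have hroots : b - a ≤ Multiset.card (p.roots.filter
            (fun x => x ∈ Set.Icc (a:ℝ) (b:ℝ))) := by
          have := int_zeros_le p hp (fun x => x ∈ Set.Icc (a:ℝ) (b:ℝ)) (Finset.Ioc a b)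
            (by
              intro j hj
              rw [Finset.mem_Ioc] at hj
              refine ⟨hex j (Finset.mem_Ioc.2 hj), ?_, ?_⟩
              · exact_mod_cast le_of_lt hj.1
              · exact_mod_cast hj.2)
          rw [Nat.card_Ioc] at this
          exact this
        omega

lemma starts_count (g : ℕ → Prop) [DecidablePred g] :
    ∀ N : ℕ, 1 ≤ N →
    2 * ((Finset.range N).filter (fun s => g s ∧ (s = 0 ∨ ¬ g (s-1)))).card
      = ((Finset.range (N-1)).filter (fun i => ¬ (g i ↔ g (i+1)))).card
        + (if g 0 then 1 else 0) + (if g (N-1) then 1 else 0) := by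
  intro N
  induction N with
  | zero => intro h; omega
  | succ N ih =>
    intro _
    rcases Nat.eq_zero_or_pos N with rfl | hN
    · show 2 * ((Finset.range 1).filter _).card = ((Finset.range 0).filter _).card + _ + _
      by_cases h0 : g 0 <;>
        simp [Finset.range_one, Finset.filter_singleton, h0]
    · have IH := ih hN
      have hN1 : N - 1 + 1 = N := by omega
      have hstart : ((Finset.range (N+1)).filter (fun s => g s ∧ (s = 0 ∨ ¬ g (s-1)))).card
          = ((Finset.range N).filter (fun s => g s ∧ (s = 0 ∨ ¬ g (s-1)))).card
            + (if g N ∧ ¬ g (N-1) then 1 else 0) := by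
        rw [Finset.range_add_one, Finset.filter_insert]
        by_cases h : g N ∧ (N = 0 ∨ ¬ g (N-1))
        · rw [if_pos h, if_pos ⟨h.1, h.2.resolve_left (by omega)⟩,
            Finset.card_insert_of_notMem
              (fun hc => by simpa using Finset.mem_of_mem_filter _ hc)]
        · rw [if_neg h, if_neg (fun hc => h ⟨hc.1, Or.inr hc.2⟩)]
          omega
      have hflip : ((Finset.range N).filter (fun i => ¬ (g i ↔ g (i+1)))).card
          = ((Finset.range (N-1)).filter (fun i => ¬ (g i ↔ g (i+1)))).card
            + (if ¬ (g (N-1) ↔ g N) then 1 else 0) := by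
        conv_lhs => rw [show N = (N-1)+1 from hN1.symm]
        rw [Finset.range_add_one, Finset.filter_insert]
        by_cases h : ¬ (g (N-1) ↔ g N)
        · rw [if_pos (by rw [hN1]; exact h),
            Finset.card_insert_of_notMem
              (fun hc => by simpa using Finset.mem_of_mem_filter _ hc), if_pos h]
        · rw [if_neg (by rw [hN1]; exact h), if_neg h]
          omega
      rw [show N + 1 - 1 = N from rfl, hstart, hflip]
      by_cases h1 : g N <;> by_cases h2 : g (N-1) <;>
        (simp only [h1, h2, iff_true, iff_false, not_true, not_false_iff, not_not,
          and_true, and_false, true_and, false_and, if_true, if_false,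
          ite_true, ite_false] at IH ⊢ <;> omega)

theorem gale_lemma (n k ℓ : ℕ) (hk : 1 ≤ k) (hℓ : 1 ≤ ℓ) (hd : 2 * k + 2 * ℓ ≤ n) :
    ∃ f : Fin n → EuclideanSpace ℝ (Fin (dval n k ℓ)),
      (∀ i, f i ∈ Metric.sphere (0 : EuclideanSpace ℝ (Fin (dval n k ℓ))) 1) ∧
      ∀ x ∈ Metric.sphere (0 : EuclideanSpace ℝ (Fin (dval n k ℓ))) 1,
        ∃ S : Finset (Fin n), S.card = k + ℓ ∧ IsStable S ∧
          ∀ i ∈ S, 0 < ⟪x, f i⟫ := by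
  classical
  set m := k + ℓ with hm
  set d := dval n k ℓ with hdval
  have hdeq : d = n - 2 * m + 1 := by rw [hdval]; unfold dval; omega
  have hm2 : 2 ≤ m := by omega
  have hn4 : 4 ≤ n := by omega
  have hd1 : 1 ≤ d := by omega
  set v : Fin n → EuclideanSpace ℝ (Fin d) :=
    (fun i => WithLp.toLp 2 (fun j => (-1)^(i:ℕ) * ((i:ℕ):ℝ)^(j:ℕ))) with hv
  have hv0 : ∀ i, v i ≠ 0 := by
    intro i h
    have h2 : v i ⟨0, hd1⟩ = 0 := by rw [h]; rfl
    rw [hv] at h2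
    simp at h2
  have hvnorm : ∀ i, 0 < ‖v i‖ := fun i => norm_pos_iff.2 (hv0 i)
  refine ⟨fun i => ‖v i‖⁻¹ • v i, ?_, ?_⟩
  · intro i
    rw [mem_sphere_zero_iff_norm, norm_smul, Real.norm_eq_abs, abs_inv, abs_norm]
    exact inv_mul_cancel₀ (hvnorm i).ne'
  · intro x hx
    have hxnorm : ‖x‖ = 1 := mem_sphere_zero_iff_norm.1 hx
    have hxne : x ≠ 0 := by intro h; rw [h] at hxnorm; simp at hxnorm
    set p : Polynomial ℝ := ∑ j : Fin d, Polynomial.C (x j) * Polynomial.X ^ (j:ℕ) with hpdef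
    have hcoeff : ∀ j : Fin d, p.coeff (j:ℕ) = x j := by
      intro j
      rw [hpdef, Polynomial.finset_sum_coeff]
      rw [Finset.sum_eq_single j]
      · simp [Polynomial.coeff_C_mul, Polynomial.coeff_X_pow]
      · intro j' _ hj'
        simp only [Polynomial.coeff_C_mul, Polynomial.coeff_X_pow]
        rw [if_neg (fun h => hj' (Fin.ext (by omega)))]
        ring
      · intro h; exact absurd (Finset.mem_univ j) h
    have hpne : p ≠ 0 := by
      intro h
      apply hxne
      ext j
      have := hcoeff j
      rw [h, Polynomial.coeff_zero] at this
      exact this.symm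
    have hdeg : p.natDegree ≤ n - 2*m := by
      have h1 : p.natDegree ≤ d - 1 := by
        rw [hpdef]
        refine Polynomial.natDegree_sum_le_of_forall_le _ _ (fun j _ => ?_)
        exact le_trans (Polynomial.natDegree_C_mul_X_pow_le (x j) (j:ℕ)) (by omega)
      omega
    have heval : ∀ i : ℕ, p.eval (i:ℝ) = ∑ j : Fin d, x j * ((i:ℕ):ℝ)^(j:ℕ) := by
      intro i
      rw [hpdef, Polynomial.eval_finset_sum]
      simp
    have hinner : ∀ i : Fin n, ⟪x, ‖v i‖⁻¹ • v i⟫ = ‖v i‖⁻¹ * qq p (i:ℕ) := by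
      intro i
      rw [real_inner_smul_right]
      congr 1
      rw [PiLp.inner_apply]
      unfold qq
      rw [heval, Finset.mul_sum]
      refine Finset.sum_congr rfl (fun j _ => ?_)
      rw [hv]
      simp only [RCLike.inner_apply, conj_trivial, WithLp.ofLp_toLp]
      ring
    set g : ℕ → Prop := fun i => 0 < qq p i with hg
    have hgdef : ∀ i, g i ↔ 0 < qq p i := fun i => by rw [hg]
    clear_value g
    have hgood := good_le_roots p hpne (n-1) 0 (n-1) (by omega) (by omega)
    have hrb : Multiset.card (p.roots.filter (· ∈ Set.Icc ((0:ℕ):ℝ) ((n-1:ℕ):ℝ))) ≤ n - 2*m :=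
      le_trans (Multiset.card_le_card (Multiset.filter_le _ _))
        (le_trans (Polynomial.card_roots' p) hdeg)
    have hgood2 : ((Finset.range (n-1)).filter (fun i => (g i ↔ g (i+1)))).card ≤ n - 2*m := by
      rw [Finset.range_eq_Ico]
      have hEq : (Finset.Ico 0 (n-1)).filter (fun i => (g i ↔ g (i+1)))
          = (Finset.Ico 0 (n-1)).filter (fun i => (0 < qq p i ↔ 0 < qq p (i+1))) :=
        Finset.filter_congr (fun x _ => by rw [hgdef, hgdef])
      rw [hEq]
      exact le_trans hgood hrb
    have hmixed : 2*m - 1 ≤ ((Finset.range (n-1)).filter (fun i => ¬ (g i ↔ g (i+1)))).card := by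
      have htot := Finset.card_filter_add_card_filter_not
        (s := Finset.range (n-1)) (p := fun i => (g i ↔ g (i+1)))
      rw [Finset.card_range] at htot
      omega
    have hstarts : 2 * ((Finset.range n).filter (fun s => g s ∧ (s = 0 ∨ ¬ g (s-1)))).card
        = ((Finset.range (n-1)).filter (fun i => ¬ (g i ↔ g (i+1)))).card
          + (if g 0 then 1 else 0) + (if g (n-1) then 1 else 0) := starts_count g n (by omega)
    set S0 := (Finset.range n).filter (fun s => g s ∧ (s = 0 ∨ ¬ g (s-1))) with hS0
    clear_value S0
    obtain ⟨MX, hMX⟩ : ∃ MX, MX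
        = ((Finset.range (n-1)).filter (fun i => ¬ (g i ↔ g (i+1)))).card := ⟨_, rfl⟩
    rw [← hMX] at hstarts hmixed
    obtain ⟨SC, hSC⟩ : ∃ SC, SC = S0.card := ⟨_, rfl⟩
    rw [← hSC] at hstarts
    have hcardS0 : m ≤ S0.card ∧ ((g 0 ∧ g (n-1)) → m + 1 ≤ S0.card) := by
      rw [← hSC]
      by_cases h0 : g 0 <;> by_cases h1 : g (n-1) <;>
        simp only [h0, h1, if_true, if_false, ite_true, ite_false, true_and, false_and,
          and_true, and_false, true_implies, false_implies, and_self] at hstarts ⊢ <;>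
        omega
    set T : Finset ℕ := if g 0 ∧ g (n-1) then S0.erase (n-1) else S0 with hT
    clear_value T
    have hTsub : T ⊆ S0 := by
      rw [hT]; split_ifs
      · exact Finset.erase_subset _ _
      · exact subset_rfl
    have hTcard : m ≤ T.card := by
      rw [hT]; split_ifs with h
      · have := hcardS0.2 h
        have h2 := Finset.pred_card_le_card_erase (s := S0) (a := n-1)
        omega
      · exact hcardS0.1
    have hTprop : ∀ i ∈ T, i < n ∧ g i ∧ (i = 0 ∨ ¬ g (i - 1)) := by
      intro i hi
      have h2 := hTsub hi
      rw [hS0, Finset.mem_filter, Finset.mem_range] at h2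
      exact ⟨h2.1, h2.2⟩
    have hTwrap : ¬ (0 ∈ T ∧ (n-1) ∈ T) := by
      rintro ⟨h1, h2⟩
      have hgg : g 0 ∧ g (n-1) := ⟨(hTprop 0 h1).2.1, (hTprop _ h2).2.1⟩
      rw [hT, if_pos hgg] at h2
      exact Finset.notMem_erase _ _ h2
    obtain ⟨T', hT'sub, hT'card⟩ := Finset.exists_subset_card_eq hTcard
    have hbnd : ∀ i ∈ T', i < n := fun i hi => (hTprop i (hT'sub hi)).1
    refine ⟨T'.attachFin hbnd, by rw [Finset.card_attachFin]; exact hT'card, ?_, ?_⟩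
    · -- stability
      intro i hi j hj heq
      rw [Finset.mem_attachFin] at hi hj
      have hiT := hT'sub hi
      have hjT := hT'sub hj
      have hip := hTprop _ hiT
      have hjp := hTprop _ hjT
      by_cases hlast : (i:ℕ) = n - 1
      · have h1 : (i:ℕ)+1 = n := by omega
        have h0 : ((i:ℕ)+1) % n = 0 := by rw [h1, Nat.mod_self]
        rw [h0] at heq
        exact hTwrap ⟨by rw [← heq] at hjT; exact hjT, by rw [← hlast]; exact hiT⟩
      · have h0 : ((i:ℕ)+1) % n = (i:ℕ)+1 := Nat.mod_eq_of_lt (by have := i.isLt; omega)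
        rw [h0] at heq
        rcases hjp.2.2 with h | h
        · omega
        · apply h
          rw [← heq]
          exact (hgdef _).2 ((hgdef _).1 hip.2.1)
    · -- positivity
      intro i hi
      rw [Finset.mem_attachFin] at hi
      have hgi := (hgdef _).1 (hTprop _ (hT'sub hi)).2.1
      rw [hinner i]
      exact mul_pos (inv_pos.2 (hvnorm i)) hgi
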